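/- Let D be a one-dimensional valuation domain, not a DVR, with quotient field K, additive valuation ω : K^× → ℝ, and value group G := ω(K^×) dense in ℝ, and define φ(I) := sup{ω(x) : x ∈ K^×, I ⊆ xD} for nonzero fractional ideals I of D. Then for all divisorial fractional ideals I, J of D, φ((IJ)^v) = φ(I) + φ(J); that is, φ is a group homomorphism from the group of divisorial fractional ideals under v-multiplication to (ℝ, +). -/

import Mathlib

noncomputable section

/-- The `v`-operation `E ↦ (E⁻¹)⁻¹ = (D : (D : E))` on `D`-submodules of `K`. -/
def vOp (D K : Type*) [CommRing D] [Field K] [Algebra D K] (E : Submodule D K) :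
    Submodule D K :=
  (1 : Submodule D K) / ((1 : Submodule D K) / E)

/-- `φ(I) := sup {ω(x) : x ∈ K^×, I ⊆ xD}`. -/
def phiVal (D K : Type*) [CommRing D] [Field K] [Algebra D K] (ω : K → ℝ)
    (I : Submodule D K) : ℝ :=
  sSup {r : ℝ | ∃ x : K, x ≠ 0 ∧ I ≤ Submodule.span D {x} ∧ ω x = r}

namespace PhiAux

variable {D K : Type*} [CommRing D] [IsDomain D] [Field K] [Algebra D K] [IsFractionRing D K]
variable (ω : K → ℝ)

/-- The set whose sup is `phiVal`. -/
def Sset (I : Submodule D K) : Set ℝ :=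
  {r : ℝ | ∃ x : K, x ≠ 0 ∧ I ≤ Submodule.span D {x} ∧ ω x = r}

lemma phiVal_eq (I : Submodule D K) : phiVal D K ω I = sSup (Sset ω I) := rfl

variable (hhom : ∀ x y : K, x ≠ 0 → y ≠ 0 → ω (x * y) = ω x + ω y)
variable (hD : ∀ x : K, (∃ d : D, algebraMap D K d = x) ↔ x = 0 ∨ 0 ≤ ω x)

include hhom in
lemma omega_one : ω (1 : K) = 0 := by
  have := hhom 1 1 one_ne_zero one_ne_zero
  rw [mul_one] at this; linarith

include hhom in
lemma omega_inv {x : K} (hx : x ≠ 0) : ω x⁻¹ = -ω x := by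
  have := hhom x x⁻¹ hx (inv_ne_zero hx)
  rw [mul_inv_cancel₀ hx, omega_one ω hhom] at this; linarith

include hD in
lemma omega_alg_nonneg {d : D} (hd : algebraMap D K d ≠ 0) : 0 ≤ ω (algebraMap D K d) := by
  rcases (hD _).1 ⟨d, rfl⟩ with h | h
  · exact absurd h hd
  · exact h

include hhom hD in
lemma mem_span_iff {x y : K} (hx : x ≠ 0) :
    y ∈ Submodule.span D {x} ↔ y = 0 ∨ ω x ≤ ω y := by
  rw [Submodule.mem_span_singleton]
  constructor
  · rintro ⟨a, rfl⟩
    by_cases ha : (algebraMap D K a) = 0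
    · left; rw [Algebra.smul_def, ha, zero_mul]
    · right
      rw [Algebra.smul_def, hhom _ _ ha hx]
      have := omega_alg_nonneg ω hD ha
      linarith
  · rintro (rfl | h)
    · exact ⟨0, by simp⟩
    · by_cases hy : y = 0
      · exact ⟨0, by simp [hy]⟩
      · have hxi : x⁻¹ ≠ 0 := inv_ne_zero hx
        have h1 : ω (y * x⁻¹) = ω y - ω x := by
          rw [hhom _ _ hy hxi, omega_inv ω hhom hx]; ring
        obtain ⟨d, hd⟩ := (hD (y * x⁻¹)).2 (Or.inr (by rw [h1]; linarith))
        refine ⟨d, ?_⟩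
        rw [Algebra.smul_def, hd]
        field_simp

include hhom hD in
lemma le_span_iff {x : K} (hx : x ≠ 0) (I : Submodule D K) :
    I ≤ Submodule.span D {x} ↔ ∀ y ∈ I, y = 0 ∨ ω x ≤ ω y := by
  constructor
  · intro h y hy
    exact (mem_span_iff ω hhom hD hx).1 (h hy)
  · intro h y hy
    exact (mem_span_iff ω hhom hD hx).2 (h y hy)

include hhom hD in
lemma S_nonempty {I : Submodule D K} (hf : IsFractional (nonZeroDivisors D) I) :
    (Sset ω I).Nonempty := by
  obtain ⟨a, haS, ha⟩ := hf
  have ha0 : algebraMap D K a ≠ 0 := by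
    have : a ≠ 0 := nonZeroDivisors.ne_zero haS
    exact (map_ne_zero_iff _ (IsFractionRing.injective D K)).2 this
  refine ⟨ω (algebraMap D K a)⁻¹, (algebraMap D K a)⁻¹, inv_ne_zero ha0, ?_, rfl⟩
  rw [le_span_iff ω hhom hD (inv_ne_zero ha0)]
  intro y hy
  by_cases hy0 : y = 0
  · exact Or.inl hy0
  · right
    obtain ⟨d, hd⟩ := ha y hy
    have hne : algebraMap D K a * y ≠ 0 := mul_ne_zero ha0 hy0
    have h0 : 0 ≤ ω (algebraMap D K a * y) := by
      rw [Algebra.smul_def] at hd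
      rcases (hD (algebraMap D K a * y)).1 ⟨d, hd⟩ with h | h
      · exact absurd h hne
      · exact h
    rw [hhom _ _ ha0 hy0] at h0
    rw [omega_inv ω hhom ha0]
    linarith

include hhom hD in
lemma S_bddAbove {I : Submodule D K} {y₀ : K} (hy₀ : y₀ ∈ I) (hy₀0 : y₀ ≠ 0) :
    BddAbove (Sset ω I) := by
  refine ⟨ω y₀, ?_⟩
  rintro r ⟨x, hx, hle, rfl⟩
  rcases (mem_span_iff ω hhom hD hx).1 (hle hy₀) with h | h
  · exact absurd h hy₀0
  · exact h

include hhom hD in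
lemma phi_le {I : Submodule D K} (hf : IsFractional (nonZeroDivisors D) I)
    {y : K} (hy : y ∈ I) (hy0 : y ≠ 0) : phiVal D K ω I ≤ ω y := by
  rw [phiVal_eq]
  refine csSup_le (S_nonempty ω hhom hD hf) ?_
  rintro r ⟨x, hx, hle, rfl⟩
  rcases (mem_span_iff ω hhom hD hx).1 (hle hy) with h | h
  · exact absurd h hy0
  · exact h

include hhom hD in
lemma exists_omega_lt (hdense : ∀ a b : ℝ, a < b → ∃ x : K, x ≠ 0 ∧ a < ω x ∧ ω x < b)
    {I : Submodule D K} {y₀ : K} (hy₀ : y₀ ∈ I) (hy₀0 : y₀ ≠ 0)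
    {ε : ℝ} (hε : 0 < ε) : ∃ y ∈ I, y ≠ 0 ∧ ω y < phiVal D K ω I + ε := by
  by_contra hcon
  push_neg at hcon
  obtain ⟨x, hx, h1, h2⟩ := hdense (phiVal D K ω I) (phiVal D K ω I + ε) (by linarith)
  have hmem : ω x ∈ Sset ω I := by
    refine ⟨x, hx, ?_, rfl⟩
    rw [le_span_iff ω hhom hD hx]
    intro y hy
    by_cases hy0 : y = 0
    · exact Or.inl hy0
    · exact Or.inr (le_trans h2.le (hcon y hy hy0))
  have := le_csSup (S_bddAbove ω hhom hD hy₀ hy₀0) hmem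
  rw [← phiVal_eq] at this
  linarith

/-- `E ≤ vOp E`. -/
lemma le_vOp (E : Submodule D K) : E ≤ vOp D K E := by
  intro z hz
  rw [vOp, Submodule.mem_div_iff_forall_mul_mem]
  intro w hw
  rw [Submodule.mem_div_iff_forall_mul_mem] at hw
  rw [mul_comm]
  exact hw z hz

include hhom hD in
lemma vOp_le_span {x : K} (hx : x ≠ 0) {E : Submodule D K} (h : E ≤ Submodule.span D {x}) :
    vOp D K E ≤ Submodule.span D {x} := by
  have hxi : x⁻¹ ∈ (1 : Submodule D K) / E := by
    rw [Submodule.mem_div_iff_forall_mul_mem]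
    intro e he
    obtain ⟨d, hd⟩ := Submodule.mem_span_singleton.1 (h he)
    rw [Submodule.mem_one]
    refine ⟨d, ?_⟩
    rw [← hd, Algebra.smul_def]
    field_simp
  intro z hz
  rw [vOp, Submodule.mem_div_iff_forall_mul_mem] at hz
  obtain ⟨d, hd⟩ := Submodule.mem_one.1 (hz x⁻¹ hxi)
  rw [Submodule.mem_span_singleton]
  refine ⟨d, ?_⟩
  rw [Algebra.smul_def, hd]
  field_simp

include hhom hD in
lemma Sset_vOp (E : Submodule D K) : Sset ω (vOp D K E) = Sset ω E := by
  ext r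
  constructor
  · rintro ⟨x, hx, hle, rfl⟩
    exact ⟨x, hx, le_trans (le_vOp E) hle, rfl⟩
  · rintro ⟨x, hx, hle, rfl⟩
    exact ⟨x, hx, vOp_le_span ω hhom hD hx hle, rfl⟩

include hhom hD in
lemma phiVal_vOp (E : Submodule D K) : phiVal D K ω (vOp D K E) = phiVal D K ω E := by
  rw [phiVal_eq, phiVal_eq, Sset_vOp ω hhom hD]

end PhiAux

open PhiAux in
/-- **Lemma 2.12.** Let `D` be a one-dimensional valuation domain, not a DVR, with quotient
field `K`, valuation `ω : K^× → ℝ` and value group `G = ω(K^×)` dense in `ℝ`.  Then for all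
divisorial fractional ideals `I, J` of `D`, `φ((IJ)ᵛ) = φ(I) + φ(J)`: `φ` is a group
homomorphism from the group of divisorial fractional ideals under `v`-multiplication
to `(ℝ, +)`. -/
theorem phiVal_v_mul
    (D K : Type*) [CommRing D] [IsDomain D] [Field K] [Algebra D K] [IsFractionRing D K]
    (ω : K → ℝ)
    (hhom : ∀ x y : K, x ≠ 0 → y ≠ 0 → ω (x * y) = ω x + ω y)
    (hmin : ∀ x y : K, x ≠ 0 → y ≠ 0 → x + y ≠ 0 → min (ω x) (ω y) ≤ ω (x + y))
    -- `D = {x ∈ K : x = 0 ∨ ω(x) ≥ 0}`: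
    (hD : ∀ x : K, (∃ d : D, algebraMap D K d = x) ↔ x = 0 ∨ 0 ≤ ω x)
    -- `D` is not a DVR, i.e. the value group `G = ω(K^×)` is dense in `ℝ`:
    (hnotdvr : ¬ IsDiscreteValuationRing D)
    (hdense : ∀ a b : ℝ, a < b → ∃ x : K, x ≠ 0 ∧ a < ω x ∧ ω x < b) :
    ∀ I J : Submodule D K,
      I ≠ ⊥ → IsFractional (nonZeroDivisors D) I → vOp D K I = I →
      J ≠ ⊥ → IsFractional (nonZeroDivisors D) J → vOp D K J = J →
      phiVal D K ω (vOp D K (I * J)) = phiVal D K ω I + phiVal D K ω J := by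
  intro I J hI0 hIf _ hJ0 hJf _
  -- nonzero elements of I and J
  obtain ⟨y₀, hy₀I, hy₀0⟩ : ∃ y₀ ∈ I, y₀ ≠ (0 : K) := by
    by_contra h
    push_neg at h
    exact hI0 ((Submodule.eq_bot_iff I).2 h)
  obtain ⟨z₀, hz₀J, hz₀0⟩ : ∃ z₀ ∈ J, z₀ ≠ (0 : K) := by
    by_contra h
    push_neg at h
    exact hJ0 ((Submodule.eq_bot_iff J).2 h)
  have hw₀ : y₀ * z₀ ∈ I * J := Submodule.mul_mem_mul hy₀I hz₀J
  have hw₀0 : y₀ * z₀ ≠ 0 := mul_ne_zero hy₀0 hz₀0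
  -- every nonzero element of I * J has value ≥ φ(I) + φ(J)
  have hlow : ∀ z ∈ I * J, z = 0 ∨ phiVal D K ω I + phiVal D K ω J ≤ ω z := by
    intro z hz
    refine Submodule.mul_induction_on hz ?_ ?_
    · intro m hm n hn
      by_cases hm0 : m = 0
      · exact Or.inl (by rw [hm0, zero_mul])
      by_cases hn0 : n = 0
      · exact Or.inl (by rw [hn0, mul_zero])
      right
      rw [hhom _ _ hm0 hn0]
      have h1 := phi_le ω hhom hD hIf hm hm0
      have h2 := phi_le ω hhom hD hJf hn hn0
      linarith
    · intro x y hx hy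
      by_cases hx0 : x = 0
      · rw [hx0, zero_add]; exact hy
      by_cases hy0 : y = 0
      · rw [hy0, add_zero]; exact hx
      by_cases hxy : x + y = 0
      · exact Or.inl hxy
      right
      have := hmin x y hx0 hy0 hxy
      rcases hx with h | hx; · exact absurd h hx0
      rcases hy with h | hy; · exact absurd h hy0
      have : min (ω x) (ω y) ≤ ω (x + y) := this
      rcases min_le_iff.1 (le_refl (min (ω x) (ω y))) with h | h <;>
      · calc phiVal D K ω I + phiVal D K ω J ≤ min (ω x) (ω y) := le_min hx hy
          _ ≤ ω (x + y) := this
  -- S_{I*J} is nonempty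
  have hne : (Sset ω (I * J)).Nonempty := by
    obtain ⟨rI, xI, hxI, hleI, hrI⟩ := S_nonempty (D := D) ω hhom hD hIf
    obtain ⟨rJ, xJ, hxJ, hleJ, hrJ⟩ := S_nonempty (D := D) ω hhom hD hJf
    refine ⟨ω (xI * xJ), xI * xJ, mul_ne_zero hxI hxJ, ?_, rfl⟩
    rw [le_span_iff ω hhom hD (mul_ne_zero hxI hxJ)]
    intro z hz
    refine Submodule.mul_induction_on hz ?_ ?_
    · intro m hm n hn
      by_cases hm0 : m = 0
      · exact Or.inl (by rw [hm0, zero_mul])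
      by_cases hn0 : n = 0
      · exact Or.inl (by rw [hn0, mul_zero])
      right
      rw [hhom _ _ hm0 hn0, hhom _ _ hxI hxJ]
      rcases (mem_span_iff ω hhom hD hxI).1 (hleI hm) with h | h
      · exact absurd h hm0
      rcases (mem_span_iff ω hhom hD hxJ).1 (hleJ hn) with h' | h'
      · exact absurd h' hn0
      linarith
    · intro x y hx hy
      by_cases hx0 : x = 0
      · rw [hx0, zero_add]; exact hy
      by_cases hy0 : y = 0
      · rw [hy0, add_zero]; exact hx
      by_cases hxy : x + y = 0
      · exact Or.inl hxy
      right
      have hm := hmin x y hx0 hy0 hxy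
      rcases hx with h | hx; · exact absurd h hx0
      rcases hy with h | hy; · exact absurd h hy0
      calc ω (xI * xJ) ≤ min (ω x) (ω y) := le_min hx hy
        _ ≤ ω (x + y) := hm
  have hbdd : BddAbove (Sset ω (I * J)) := S_bddAbove ω hhom hD hw₀ hw₀0
  rw [phiVal_vOp ω hhom hD, phiVal_eq]
  refine le_antisymm ?_ ?_
  · -- sSup ≤ φ(I) + φ(J)
    refine csSup_le hne ?_
    rintro r ⟨x, hx, hle, rfl⟩
    by_contra hcon
    push_neg at hcon
    set ε := (ω x - phiVal D K ω I - phiVal D K ω J) / 2 with hε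
    have hεpos : 0 < ε := by simp only [hε]; linarith
    obtain ⟨y, hyI, hy0, hyv⟩ := exists_omega_lt ω hhom hD hdense hy₀I hy₀0 hεpos
    obtain ⟨z, hzJ, hz0, hzv⟩ := exists_omega_lt ω hhom hD hdense hz₀J hz₀0 hεpos
    have hyz : y * z ∈ I * J := Submodule.mul_mem_mul hyI hzJ
    rcases (mem_span_iff ω hhom hD hx).1 (hle hyz) with h | h
    · exact mul_ne_zero hy0 hz0 h
    · rw [hhom _ _ hy0 hz0] at h
      simp only [hε] at hyv hzv
      linarith
  · -- φ(I) + φ(J) ≤ sSup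
    by_contra hcon
    push_neg at hcon
    obtain ⟨x, hx, h1, h2⟩ := hdense (sSup (Sset ω (I * J)))
      (phiVal D K ω I + phiVal D K ω J) hcon
    have hmem : ω x ∈ Sset ω (I * J) := by
      refine ⟨x, hx, ?_, rfl⟩
      rw [le_span_iff ω hhom hD hx]
      intro z hz
      rcases hlow z hz with h | h
      · exact Or.inl h
      · exact Or.inr (by linarith)
    have := le_csSup hbdd hmem
    linarith
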